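/- For consecutive shifted anti-exceedance sets of a derangement $w \in S_n$: $I_{r+1}(w) = (I_r(w) \setminus \{r\}) \cup \{w(r)\}$ if $r \in I_r(w)$ and $w(r) \notin I_r(w)$, and more precisely, $I_{r+1}(w)$ differs from $I_r(w)$ only possibly in the elements $r$ and $w(r)$. -/

import Mathlib

/-- Gale order on subsets of `Fin n`: compare the `h`-th smallest elements. -/
abbrev galeLE {n : ℕ} (I J : Finset (Fin n)) : Prop :=
  I.card = J.card ∧
    ∀ h < I.card, ((I.sort (· ≤ ·)).map Fin.val).getD h 0 ≤ ((J.sort (· ≤ ·)).map Fin.val).getD h 0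

/-- The initial set `y[k] = {y(1),...,y(k)}` of a permutation. -/
def initSet {n : ℕ} (y : Equiv.Perm (Fin n)) (k : ℕ) : Finset (Fin n) :=
  (Finset.univ.filter fun j : Fin n => j.val < k).image y

/-- Bruhat order via the tableau criterion. -/
def bruhatLE {n : ℕ} (u v : Equiv.Perm (Fin n)) : Prop :=
  ∀ k : ℕ, galeLE (initSet u k) (initSet v k)

/-- `v` is `k`-Grassmannian: increasing on the first `k` positions and on the rest. -/
def isGrassmannian {n : ℕ} (v : Equiv.Perm (Fin n)) (k : ℕ) : Prop :=
  (∀ i j : Fin n, i < j → j.val < k → v i < v j) ∧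
    (∀ i j : Fin n, i < j → k ≤ i.val → v i < v j)

/-- The points `a,b,c,d` occur (weakly) in this clockwise cyclic order. -/
abbrev cyclic4 (a b c d : ℕ) : Prop :=
  ((if b < a then 1 else 0) + (if c < b then 1 else 0) +
      (if d < c then 1 else 0) + (if a < d then 1 else 0) : ℕ) ≤ 1

/-- Arcs `i ↦ w i` and `j ↦ w j` form an alignment (in this order):
the points occur clockwise as `i, w i, w j, j`. -/
abbrev isAlignment {n : ℕ} (w : Equiv.Perm (Fin n)) (i j : Fin n) : Prop :=
  i ≠ j ∧ cyclic4 i.val (w i).val (w j).val j.val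

/-- Arcs `i ↦ w i` and `j ↦ w j` form a misalignment (in this order):
the points occur clockwise as `i, w i, j, w j`. -/
abbrev isMisalignment {n : ℕ} (w : Equiv.Perm (Fin n)) (i j : Fin n) : Prop :=
  i ≠ j ∧ cyclic4 i.val (w i).val j.val (w j).val

/-- `x` lies strictly inside the clockwise open arc from `a` to `b`. -/
abbrev cIoo (a b x : ℕ) : Prop :=
  (a < b ∧ a < x ∧ x < b) ∨ (b ≤ a ∧ (x < b ∨ a < x))

/-- Arcs `i ↦ w i` and `j ↦ w j` must cross: exactly one endpoint of the second
arc lies strictly inside the clockwise arc from `i` to `w i`. -/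
abbrev isCrossing {n : ℕ} (w : Equiv.Perm (Fin n)) (i j : Fin n) : Prop :=
  i ≠ j ∧ Xor' (cIoo i.val (w i).val j.val) (cIoo i.val (w i).val (w j).val)

/-- The shifted anti-exceedance set `I_r(w) = {i : i <_r w⁻¹ i}` (0-indexed start `r`). -/
abbrev antiExc {n : ℕ} (w : Equiv.Perm (Fin n)) (r : Fin n) : Finset (Fin n) :=
  Finset.univ.filter fun i => (i - r).val < (w.symm i - r).val

/-- The shifted Gale order `⪯_r`, obtained by rotating so that `r` is smallest. -/
abbrev shiftedGaleLE {n : ℕ} (r : Fin n) (I J : Finset (Fin n)) : Prop :=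
  galeLE (I.image fun x => x - r) (J.image fun x => x - r)

/-- The collection `{y[k] : y ∈ [u,v]}`. -/
def intervalBases {n : ℕ} (u v : Equiv.Perm (Fin n)) (k : ℕ) : Set (Finset (Fin n)) :=
  {I | ∃ y : Equiv.Perm (Fin n), bruhatLE u y ∧ bruhatLE y v ∧ initSet y k = I}


lemma my_sub_one_val {n : ℕ} [NeZero n] (x : Fin n) :
    (x - 1).val = if x.val = 0 then n - 1 else x.val - 1 := by
  have hn : 0 < n := Nat.pos_of_ne_zero (NeZero.ne n)
  rw [Fin.sub_def]
  simp only [Fin.val_one']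
  rcases Nat.lt_or_ge 1 n with h | h
  · have h1 : (1 : ℕ) % n = 1 := Nat.mod_eq_of_lt h
    rw [h1]
    have hx := x.isLt
    rcases Nat.eq_zero_or_pos x.val with h0 | h0
    · rw [if_pos h0, h0, Nat.add_zero, Nat.mod_eq_of_lt (by omega)]
    · rw [if_neg (by omega)]
      have : n - 1 + x.val = (x.val - 1) + n := by omega
      rw [this, Nat.add_mod_right, Nat.mod_eq_of_lt (by omega)]
  · have hx := x.isLt
    have h2 := Nat.mod_lt (n - 1 % n + x.val) hn
    rw [if_pos (by omega)]
    omega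

lemma mem_antiExc_succ {n : ℕ} [NeZero n] (w : Equiv.Perm (Fin n)) (hw : ∀ i, w i ≠ i)
    (r i : Fin n) :
    i ∈ antiExc w (r + 1) ↔ (i ≠ r ∧ (i = w r ∨ i ∈ antiExc w r)) := by
  have hn : 0 < n := Nat.pos_of_ne_zero (NeZero.ne n)
  have hsub : ∀ j : Fin n, j - (r + 1) = (j - r) - 1 := fun j => (sub_sub j r 1).symm
  simp only [antiExc, Finset.mem_filter, Finset.mem_univ, true_and, hsub, my_sub_one_val]
  set a := (i - r).val with hadef
  set b := (w.symm i - r).val with hbdef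
  have hz : ∀ x : Fin n, x.val = 0 ↔ x = 0 := fun x => by
    rw [Fin.ext_iff, Fin.val_zero]
  have ha : i = r ↔ a = 0 := by
    rw [hadef, hz, sub_eq_zero]
  have hb : i = w r ↔ b = 0 := by
    rw [hbdef, hz, sub_eq_zero, Equiv.symm_apply_eq]
  have hab : a ≠ b := by
    intro h
    have h1 : i - r = w.symm i - r := Fin.ext h
    have h2 : i = w.symm i := sub_left_inj.mp h1
    exact hw i (by nth_rewrite 1 [h2]; exact w.apply_symm_apply i)
  have haN : a < n := (i - r).isLt
  have hbN : b < n := (w.symm i - r).isLt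
  simp only [ha, hb, ne_eq]
  split_ifs <;> omega

/-- Consecutive shifted anti-exceedance sets differ only in the elements `r` and `w r`;
if `r ∈ I_r(w)` and `w r ∉ I_r(w)`, then `I_{r+1}(w) = (I_r(w) \ {r}) ∪ {w r}`. -/
theorem antiExc_succ (n : ℕ) [NeZero n] (w : Equiv.Perm (Fin n)) (hw : ∀ i, w i ≠ i) (r : Fin n) :
    ((antiExc w (r + 1) \ antiExc w r) ∪ (antiExc w r \ antiExc w (r + 1))
      ⊆ ({r, w r} : Finset (Fin n))) ∧
    (r ∈ antiExc w r → w r ∉ antiExc w r →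
      antiExc w (r + 1) = insert (w r) ((antiExc w r).erase r)) := by
  constructor
  · intro i hi
    simp only [Finset.mem_union, Finset.mem_sdiff, mem_antiExc_succ w hw r i] at hi
    simp only [Finset.mem_insert, Finset.mem_singleton]
    by_contra hcon
    push_neg at hcon
    obtain ⟨h1, h2⟩ := hcon
    tauto
  · intro _ _
    ext i
    rw [mem_antiExc_succ w hw r i]
    simp only [Finset.mem_insert, Finset.mem_erase]
    have hwr : w r ≠ r := hw r
    constructor
    · rintro ⟨h1, h2 | h2⟩
      · exact Or.inl h2
      · exact Or.inr ⟨h1, h2⟩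
    · rintro (h | ⟨h1, h2⟩)
      · exact ⟨h ▸ hwr, Or.inl h⟩
      · exact ⟨h1, Or.inr h2⟩
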